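/- arXiv:2603.27635 — 2 statements merged into one kernel-verified Lean document; each statement's English description precedes it below -/
import Mathlib

section
/- Let N ≥ 1 be an integer and let ε_1, …, ε_n be integers with ε_i ≥ N for all i. Then the Lebesgue measure of the fundamental interval satisfies N^{n+1}/((1+N)·q_n²) ≤ |I_n(ε_1, …, ε_n)| ≤ N^n/q_n², where q_n is the convergent denominator built from ε_1, …, ε_n. -/
open MeasureTheory Filter Set
open scoped ENNReal

/-- The `N`-expansion map `T_N : [0,1] → [0,1]`,
`T_N x = N/x - ⌊N/x⌋` for `x ≠ 0`, `T_N 0 = 0`. -/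
noncomputable def TN (N : ℕ) (x : ℝ) : ℝ :=
  if x = 0 then 0 else (N : ℝ) / x - (⌊(N : ℝ) / x⌋ : ℝ)

/-- `digit N n x` is the `(n+1)`-st digit `ε_{n+1}(x)` of the `N`-expansion of `x`,
i.e. `ε_m(x) = digit N (m-1) x` for `m ≥ 1`. -/
noncomputable def digit (N : ℕ) (n : ℕ) (x : ℝ) : ℤ :=
  ⌊(N : ℝ) / ((TN N)^[n] x)⌋

/-- The set `E_M` of irrationals in `(0,1)` all of whose `N`-expansion digits lie in
`{N, …, M}`. -/
noncomputable def EM (N M : ℕ) : Set ℝ :=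
  {x | x ∈ Set.Ioo (0 : ℝ) 1 ∧ Irrational x ∧
    ∀ n : ℕ, (N : ℤ) ≤ digit N n x ∧ digit N n x ≤ (M : ℤ)}

/-- The set `F_{α,N}` of irrationals in `(0,1)` all of whose `N`-expansion digits
are at least `α`. -/
noncomputable def Fset (N : ℕ) (α : ℝ) : Set ℝ :=
  {x | x ∈ Set.Ioo (0 : ℝ) 1 ∧ Irrational x ∧ ∀ n : ℕ, α ≤ (digit N n x : ℝ)}

/-- The set `F_N` of irrationals in `(0,1)` whose `N`-expansion digits tend to infinity. -/
noncomputable def FNset (N : ℕ) : Set ℝ :=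
  {x | x ∈ Set.Ioo (0 : ℝ) 1 ∧ Irrational x ∧
    Filter.Tendsto (fun n => digit N n x) Filter.atTop Filter.atTop}

/-- Convergent denominators of the `N`-expansion with digit sequence `ε`
(where `ε i` is the `(i+1)`-st digit `ε_{i+1}`), shifted by one:
`qden N ε (n+1) = q_n`, so `qden N ε 0 = q_{-1} = 0`, `qden N ε 1 = q_0 = 1`,
and `q_n = ε_n q_{n-1} + N q_{n-2}`. -/
def qden (N : ℕ) (ε : ℕ → ℤ) : ℕ → ℤ
  | 0 => 0
  | 1 => 1
  | (n + 2) => ε n * qden N ε (n + 1) + (N : ℤ) * qden N ε n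

/-- Convergent numerators of the `N`-expansion with digit sequence `ε`, shifted by one:
`pnum N ε (n+1) = p_n`, so `pnum N ε 0 = p_{-1} = 1`, `pnum N ε 1 = p_0 = 0`,
and `p_n = ε_n p_{n-1} + N p_{n-2}`. -/
def pnum (N : ℕ) (ε : ℕ → ℤ) : ℕ → ℤ
  | 0 => 1
  | 1 => 0
  | (n + 2) => ε n * pnum N ε (n + 1) + (N : ℤ) * pnum N ε n

/-- The fundamental interval `I_n(ε_1, …, ε_n)`: irrationals in `(0,1)` whose first `n`
`N`-expansion digits are `ε 0, …, ε (n-1)` (i.e. `ε_i(x) = ε (i-1)` for `1 ≤ i ≤ n`). -/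
noncomputable def fundInterval (N : ℕ) (n : ℕ) (ε : ℕ → ℤ) : Set ℝ :=
  {x | x ∈ Set.Ioo (0 : ℝ) 1 ∧ Irrational x ∧ ∀ i < n, digit N i x = ε i}

lemma basics (N : ℕ) (ε : ℕ → ℤ) (hN : 1 ≤ N) (hε : ∀ i, (N:ℤ) ≤ ε i) : ∀ n,
    0 ≤ pnum N ε n ∧ 0 ≤ qden N ε n ∧ 1 ≤ qden N ε (n+1) ∧
    (N:ℤ) * qden N ε n ≤ qden N ε (n+1) ∧ pnum N ε (n+1) ≤ qden N ε (n+1) ∧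
    pnum N ε (n+1) + pnum N ε n ≤ qden N ε (n+1) + qden N ε n := by
  have hN' : (1:ℤ) ≤ N := by exact_mod_cast hN
  intro n
  induction n using Nat.strong_induction_on with
  | _ n ih =>
    match n with
    | 0 => norm_num [pnum, qden]
    | 1 =>
      have h0 := hε 0
      norm_num [pnum, qden]
      exact ⟨by linarith, h0, by linarith⟩
    | (m+2) =>
      obtain ⟨P1, Q1, Q1', Q1N, PQ1, S1⟩ := ih (m+1) (by omega)
      obtain ⟨P0, Q0, Q0', Q0N, PQ0, S0⟩ := ih m (by omega)
      have he1 := hε (m+1)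
      have he0 := hε m
      have hq2 : qden N ε (m+2) = ε m * qden N ε (m+1) + N * qden N ε m := rfl
      have hq3 : qden N ε (m+3) = ε (m+1) * qden N ε (m+2) + N * qden N ε (m+1) := rfl
      have hp2 : pnum N ε (m+2) = ε m * pnum N ε (m+1) + N * pnum N ε m := rfl
      have hp3 : pnum N ε (m+3) = ε (m+1) * pnum N ε (m+2) + N * pnum N ε (m+1) := rfl
      have P2 : 0 ≤ pnum N ε (m+2) := by nlinarith
      have Q2 : 0 ≤ qden N ε (m+2) := by nlinarith
      refine ⟨P2, Q2, by nlinarith, by nlinarith, ?_, ?_⟩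
      · nlinarith [mul_nonneg (by linarith : (0:ℤ) ≤ ε (m+1) - N) (by linarith : (0:ℤ) ≤ qden N ε (m+2) - pnum N ε (m+2))]
      · nlinarith [mul_nonneg (by linarith : (0:ℤ) ≤ ε (m+1) + 1 - N) (by linarith : (0:ℤ) ≤ qden N ε (m+2) - pnum N ε (m+2))]

lemma shift (N : ℕ) (ε : ℕ → ℤ) : ∀ n, pnum N ε (n+1) = N * qden N (fun i => ε (i+1)) n ∧
    qden N ε (n+1) = pnum N (fun i => ε (i+1)) n + ε 0 * qden N (fun i => ε (i+1)) n := by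
  intro n
  induction n using Nat.strong_induction_on with
  | _ n ih =>
    match n with
    | 0 => norm_num [pnum, qden]
    | 1 => norm_num [pnum, qden]
    | (m+2) =>
      obtain ⟨A1, B1⟩ := ih (m+1) (by omega)
      obtain ⟨A0, B0⟩ := ih m (by omega)
      constructor
      · show ε (m+1) * pnum N ε (m+2) + N * pnum N ε (m+1)
            = N * (ε (m+1) * qden N (fun i => ε (i+1)) (m+1) + N * qden N (fun i => ε (i+1)) m)
        rw [A1, A0]; ring
      · show ε (m+1) * qden N ε (m+2) + N * qden N ε (m+1)
            = (ε (m+1) * pnum N (fun i => ε (i+1)) (m+1) + N * pnum N (fun i => ε (i+1)) m)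
              + ε 0 * (ε (m+1) * qden N (fun i => ε (i+1)) (m+1) + N * qden N (fun i => ε (i+1)) m)
        rw [B1, B0]; ring

lemma det (N : ℕ) (ε : ℕ → ℤ) : ∀ n,
    pnum N ε n * qden N ε (n+1) - pnum N ε (n+1) * qden N ε n = (-(N:ℤ))^n := by
  intro n
  induction n with
  | zero => norm_num [pnum, qden]
  | succ m ih =>
    have hq2 : qden N ε (m+2) = ε m * qden N ε (m+1) + N * qden N ε m := rfl
    have hp2 : pnum N ε (m+2) = ε m * pnum N ε (m+1) + N * pnum N ε m := rfl
    rw [hq2, hp2, pow_succ]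
    linear_combination (-(N:ℤ)) * ih


lemma mem_uIoo_iff' {a b y : ℝ} : y ∈ Set.uIoo a b ↔ (a < y ∧ y < b) ∨ (b < y ∧ y < a) := by
  rcases le_total a b with h | h
  · rw [Set.uIoo_of_le h]
    constructor
    · rintro ⟨h1, h2⟩; exact Or.inl ⟨h1, h2⟩
    · rintro (⟨h1, h2⟩ | ⟨h1, h2⟩)
      · exact ⟨h1, h2⟩
      · exact absurd ((h1.trans h2).trans_le h) (lt_irrefl _)
  · rw [Set.uIoo_of_ge h]
    constructor
    · rintro ⟨h1, h2⟩; exact Or.inr ⟨h1, h2⟩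
    · rintro (⟨h1, h2⟩ | ⟨h1, h2⟩)
      · exact absurd ((h1.trans h2).trans_le h) (lt_irrefl _)
      · exact ⟨h1, h2⟩

lemma uIoo_anti {f : ℝ → ℝ} {s : Set ℝ} (hf : ∀ u ∈ s, ∀ v ∈ s, u < v → f v < f u)
    {a b y : ℝ} (ha : a ∈ s) (hb : b ∈ s) (hy : y ∈ s) (h : y ∈ Set.uIoo a b) :
    f y ∈ Set.uIoo (f a) (f b) := by
  rw [mem_uIoo_iff'] at h ⊢
  rcases h with ⟨h1, h2⟩ | ⟨h1, h2⟩
  · exact Or.inr ⟨hf _ hy _ hb h2, hf _ ha _ hy h1⟩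
  · exact Or.inl ⟨hf _ hy _ ha h2, hf _ hb _ hy h1⟩

lemma uIoo_subset_Ioo01 {a b : ℝ} (ha : a ∈ Set.Icc (0:ℝ) 1) (hb : b ∈ Set.Icc (0:ℝ) 1) :
    Set.uIoo a b ⊆ Set.Ioo 0 1 := by
  intro y hy
  rw [mem_uIoo_iff'] at hy
  rcases hy with ⟨h1, h2⟩ | ⟨h1, h2⟩
  · exact ⟨lt_of_le_of_lt ha.1 h1, lt_of_lt_of_le h2 hb.2⟩
  · exact ⟨lt_of_le_of_lt hb.1 h1, lt_of_lt_of_le h2 ha.2⟩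

lemma digit_succ (N i : ℕ) (x : ℝ) : digit N (i+1) x = digit N i (TN N x) := by
  unfold digit
  rw [Function.iterate_succ_apply]

set_option maxHeartbeats 2000000 in
lemma char (N : ℕ) (hN : 1 ≤ N) : ∀ (n : ℕ) (ε : ℕ → ℤ), (∀ i, (N:ℤ) ≤ ε i) →
    ∀ x : ℝ, Irrational x → x ∈ Set.Ioo (0:ℝ) 1 →
    ((∀ i < n, digit N i x = ε i) ↔
      x ∈ Set.uIoo ((pnum N ε (n+1) : ℝ) / (qden N ε (n+1) : ℝ))
        (((pnum N ε (n+1) : ℝ) + (pnum N ε n : ℝ)) / ((qden N ε (n+1) : ℝ) + (qden N ε n : ℝ)))) := by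
  intro n
  induction n with
  | zero =>
    intro ε hε x hxirr hx
    have e1 : pnum N ε 1 = 0 := rfl
    have e2 : pnum N ε 0 = 1 := rfl
    have e3 : qden N ε 1 = 1 := rfl
    have e4 : qden N ε 0 = 0 := rfl
    rw [e1, e2, e3, e4]
    norm_num
    exact ⟨hx.1, hx.2⟩
  | succ n IH =>
    intro ε hε x hxirr hx
    have hε' : ∀ i, (N:ℤ) ≤ (fun i => ε (i+1)) i := fun i => hε (i+1)
    have hNR : (1:ℝ) ≤ (N:ℝ) := by exact_mod_cast hN
    have hN0 : (0:ℝ) < (N:ℝ) := by linarith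
    have hNne : N ≠ 0 := by omega
    have he0 : (N:ℤ) ≤ ε 0 := hε 0
    have he0R : (1:ℝ) ≤ (ε 0 : ℝ) := by
      have : (1:ℤ) ≤ ε 0 := le_trans (by exact_mod_cast hN) he0
      exact_mod_cast this
    obtain ⟨P1, Q1, Q1', Q1N, PQ1, S1⟩ := basics N (fun i => ε (i+1)) hN hε' n
    obtain ⟨P2, _, _, _, _, _⟩ := basics N (fun i => ε (i+1)) hN hε' (n+1)
    -- real versions
    have hp1 : (0:ℝ) ≤ (pnum N (fun i => ε (i+1)) (n+1) : ℝ) := by exact_mod_cast P2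
    have hp0 : (0:ℝ) ≤ (pnum N (fun i => ε (i+1)) n : ℝ) := by exact_mod_cast P1
    have hq1 : (1:ℝ) ≤ (qden N (fun i => ε (i+1)) (n+1) : ℝ) := by exact_mod_cast Q1'
    have hq0 : (0:ℝ) ≤ (qden N (fun i => ε (i+1)) n : ℝ) := by exact_mod_cast Q1
    have hle : (pnum N (fun i => ε (i+1)) (n+1) : ℝ) ≤ (qden N (fun i => ε (i+1)) (n+1) : ℝ) := by
      exact_mod_cast PQ1
    have hle2 : (pnum N (fun i => ε (i+1)) (n+1) : ℝ) + (pnum N (fun i => ε (i+1)) n : ℝ)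
        ≤ (qden N (fun i => ε (i+1)) (n+1) : ℝ) + (qden N (fun i => ε (i+1)) n : ℝ) := by
      push_cast
      exact_mod_cast S1
    set p1 : ℝ := (pnum N (fun i => ε (i+1)) (n+1) : ℝ) with hp1def
    set p0 : ℝ := (pnum N (fun i => ε (i+1)) n : ℝ) with hp0def
    set q1 : ℝ := (qden N (fun i => ε (i+1)) (n+1) : ℝ) with hq1def
    set q0 : ℝ := (qden N (fun i => ε (i+1)) n : ℝ) with hq0def
    have hq1pos : (0:ℝ) < q1 := by linarith
    have hq10pos : (0:ℝ) < q1 + q0 := by linarith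
    have ha'mem : p1 / q1 ∈ Set.Icc (0:ℝ) 1 :=
      ⟨div_nonneg hp1 hq1pos.le, div_le_one_of_le₀ hle hq1pos.le⟩
    have hb'mem : (p1 + p0) / (q1 + q0) ∈ Set.Icc (0:ℝ) 1 :=
      ⟨div_nonneg (by linarith) hq10pos.le, div_le_one_of_le₀ hle2 hq10pos.le⟩
    have ha'0 : (0:ℝ) ≤ p1 / q1 := ha'mem.1
    have hb'0 : (0:ℝ) ≤ (p1 + p0) / (q1 + q0) := hb'mem.1
    obtain ⟨sh1p, sh1q⟩ := shift N ε (n+1)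
    obtain ⟨sh0p, sh0q⟩ := shift N ε n
    -- endpoint identities
    have hda : (0:ℝ) < (ε 0 : ℝ) + p1 / q1 := by linarith
    have hdb : (0:ℝ) < (ε 0 : ℝ) + (p1 + p0) / (q1 + q0) := by linarith
    have hqd2 : (qden N ε (n+2) : ℝ) = p1 + (ε 0 : ℝ) * q1 := by
      rw [sh1q]; push_cast; ring
    have hpd2 : (pnum N ε (n+2) : ℝ) = (N:ℝ) * q1 := by
      rw [sh1p]; push_cast; ring
    have hqd1 : (qden N ε (n+1) : ℝ) = p0 + (ε 0 : ℝ) * q0 := by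
      rw [sh0q]; push_cast; ring
    have hpd1 : (pnum N ε (n+1) : ℝ) = (N:ℝ) * q0 := by
      rw [sh0p]; push_cast; ring
    have hqd2pos : (0:ℝ) < p1 + (ε 0 : ℝ) * q1 := by nlinarith
    have hqd21pos : (0:ℝ) < (p1 + (ε 0 : ℝ) * q1) + (p0 + (ε 0 : ℝ) * q0) := by nlinarith
    have hga : (N:ℝ) / ((ε 0 : ℝ) + p1 / q1) = (pnum N ε (n+2) : ℝ) / (qden N ε (n+2) : ℝ) := by
      rw [hpd2, hqd2]
      rw [div_eq_div_iff hda.ne' hqd2pos.ne']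
      field_simp
      ring
    have hgb : (N:ℝ) / ((ε 0 : ℝ) + (p1 + p0) / (q1 + q0))
        = ((pnum N ε (n+2) : ℝ) + (pnum N ε (n+1) : ℝ))
          / ((qden N ε (n+2) : ℝ) + (qden N ε (n+1) : ℝ)) := by
      rw [hpd2, hqd2, hpd1, hqd1]
      rw [div_eq_div_iff hdb.ne' (by nlinarith : (0:ℝ) < (p1 + (ε 0:ℝ)*q1) + (p0 + (ε 0:ℝ)*q0)).ne']
      field_simp
      ring
    -- the decreasing map and its inverse
    have hf : ∀ u ∈ Set.Ici (0:ℝ), ∀ v ∈ Set.Ici (0:ℝ), u < v →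
        (N:ℝ) / ((ε 0 : ℝ) + v) < (N:ℝ) / ((ε 0 : ℝ) + u) := by
      intro u hu v hv huv
      have hu0 : (0:ℝ) ≤ u := hu
      exact div_lt_div_of_pos_left hN0 (by linarith) (by linarith)
    constructor
    · intro h
      have hx0 : x ≠ 0 := hxirr.ne_zero
      have hfl : ⌊(N:ℝ)/x⌋ = ε 0 := by
        have := h 0 (by omega)
        simpa [digit] using this
      have hNx : Irrational ((N:ℝ)/x) := hxirr.natCast_div hNne
      have hTx : TN N x = (N:ℝ)/x - (ε 0 : ℝ) := by
        rw [TN, if_neg hx0, hfl]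
      have hTirr : Irrational (TN N x) := by
        rw [hTx]; exact hNx.sub_intCast (ε 0)
      have hT01 : TN N x ∈ Set.Ioo (0:ℝ) 1 := by
        have l1 := Int.floor_le ((N:ℝ)/x)
        have l2 := Int.lt_floor_add_one ((N:ℝ)/x)
        constructor
        · rcases lt_or_eq_of_le (by rw [hTx, ← hfl]; push_cast; linarith :
            (0:ℝ) ≤ TN N x) with hlt | heq
          · exact hlt
          · exact absurd heq.symm hTirr.ne_zero
        · rw [hTx, ← hfl]; push_cast; linarith
      have hdig' : ∀ i < n, digit N i (TN N x) = ε (i+1) := by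
        intro i hi
        rw [← digit_succ]
        exact h (i+1) (by omega)
      have hyu := (IH (fun i => ε (i+1)) hε' (TN N x) hTirr hT01).mp hdig'
      rw [← hp1def, ← hp0def, ← hq1def, ← hq0def] at hyu
      have hxval : x = (N:ℝ) / ((ε 0 : ℝ) + TN N x) := by
        rw [hTx]
        have : (ε 0 : ℝ) + ((N:ℝ)/x - (ε 0 : ℝ)) = (N:ℝ)/x := by ring
        rw [this, div_div_cancel₀ (by positivity : (N:ℝ) ≠ 0)]
      have hres := uIoo_anti (f := fun t => (N:ℝ) / ((ε 0 : ℝ) + t)) hf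
        (Set.mem_Ici.mpr ha'0) (Set.mem_Ici.mpr hb'0) (Set.mem_Ici.mpr hT01.1.le) hyu
      rw [hga, hgb] at hres
      rw [hxval]
      exact hres
    · intro hxu
      rw [← hga, ← hgb] at hxu
      have hx0 : (0:ℝ) < x := hx.1
      have hfa0 : (0:ℝ) < (N:ℝ) / ((ε 0 : ℝ) + p1 / q1) := div_pos hN0 hda
      have hfb0 : (0:ℝ) < (N:ℝ) / ((ε 0 : ℝ) + (p1 + p0) / (q1 + q0)) := div_pos hN0 hdb
      have hg : ∀ u ∈ Set.Ioi (0:ℝ), ∀ v ∈ Set.Ioi (0:ℝ), u < v →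
          (N:ℝ)/v - (ε 0 : ℝ) < (N:ℝ)/u - (ε 0 : ℝ) := by
        intro u hu v hv huv
        have := div_lt_div_of_pos_left hN0 (Set.mem_Ioi.mp hu) huv
        linarith
      have hres := uIoo_anti (f := fun t => (N:ℝ)/t - (ε 0 : ℝ)) hg
        (Set.mem_Ioi.mpr hfa0) (Set.mem_Ioi.mpr hfb0) (Set.mem_Ioi.mpr hx0) hxu
      have hc1 : (N:ℝ) / ((N:ℝ) / ((ε 0 : ℝ) + p1 / q1)) - (ε 0 : ℝ) = p1 / q1 := by
        rw [div_div_cancel₀ (by positivity : (N:ℝ) ≠ 0)]; ring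
      have hc2 : (N:ℝ) / ((N:ℝ) / ((ε 0 : ℝ) + (p1 + p0) / (q1 + q0))) - (ε 0 : ℝ)
          = (p1 + p0) / (q1 + q0) := by
        rw [div_div_cancel₀ (by positivity : (N:ℝ) ≠ 0)]; ring
      rw [hc1, hc2] at hres
      set y : ℝ := (N:ℝ)/x - (ε 0 : ℝ) with hydef
      have hy01 : y ∈ Set.Ioo (0:ℝ) 1 := uIoo_subset_Ioo01 ha'mem hb'mem hres
      have hyirr : Irrational y := (hxirr.natCast_div hNne).sub_intCast (ε 0)
      have hfl : ⌊(N:ℝ)/x⌋ = ε 0 := by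
        rw [Int.floor_eq_iff]
        constructor
        · have := hy01.1; rw [hydef] at this; linarith
        · have := hy01.2; rw [hydef] at this; push_cast; linarith
      have hTx : TN N x = y := by
        rw [TN, if_neg (ne_of_gt hx0), hfl, hydef]
      have hdigy := (IH (fun i => ε (i+1)) hε' y hyirr hy01).mpr
        (by rw [← hp1def, ← hp0def, ← hq1def, ← hq0def]; exact hres)
      intro i hi
      match i with
      | 0 => simpa [digit] using hfl
      | (j+1) =>
        rw [digit_succ, hTx]
        exact hdigy j (by omega)


set_option maxHeartbeats 1000000 in
/-- Two-sided bounds for the length of a fundamental interval: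
`N^{n+1} / ((1+N) q_n²) ≤ |I_n(ε_1, …, ε_n)| ≤ N^n / q_n²`
(recall `qden N ε (n+1) = q_n`). -/
theorem stmt_13 (N : ℕ) (hN : 1 ≤ N) (n : ℕ) (ε : ℕ → ℤ) (hε : ∀ i, (N : ℤ) ≤ ε i) :
    ENNReal.ofReal ((N : ℝ) ^ (n + 1) / ((1 + (N : ℝ)) * (qden N ε (n + 1) : ℝ) ^ 2))
        ≤ volume (fundInterval N n ε) ∧
      volume (fundInterval N n ε) ≤
        ENNReal.ofReal ((N : ℝ) ^ n / (qden N ε (n + 1) : ℝ) ^ 2) := by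
  obtain ⟨P1, Q1, Q1', Q1N, PQ1, S1⟩ := basics N ε hN hε n
  obtain ⟨P2, _, _, _, _, _⟩ := basics N ε hN hε (n+1)
  have hNR : (1:ℝ) ≤ (N:ℝ) := by exact_mod_cast hN
  have hp1 : (0:ℝ) ≤ (pnum N ε (n+1) : ℝ) := by exact_mod_cast P2
  have hp0 : (0:ℝ) ≤ (pnum N ε n : ℝ) := by exact_mod_cast P1
  have hq1 : (1:ℝ) ≤ (qden N ε (n+1) : ℝ) := by exact_mod_cast Q1'
  have hq0 : (0:ℝ) ≤ (qden N ε n : ℝ) := by exact_mod_cast Q1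
  have hle : (pnum N ε (n+1) : ℝ) ≤ (qden N ε (n+1) : ℝ) := by exact_mod_cast PQ1
  have hle2 : (pnum N ε (n+1) : ℝ) + (pnum N ε n : ℝ)
      ≤ (qden N ε (n+1) : ℝ) + (qden N ε n : ℝ) := by exact_mod_cast S1
  have hkey : (N:ℝ) * (qden N ε n : ℝ) ≤ (qden N ε (n+1) : ℝ) := by exact_mod_cast Q1N
  set p : ℝ := (pnum N ε (n+1) : ℝ) with hpdef
  set p0 : ℝ := (pnum N ε n : ℝ) with hp0def
  set q : ℝ := (qden N ε (n+1) : ℝ) with hqdef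
  set q0 : ℝ := (qden N ε n : ℝ) with hq0def
  have hqpos : (0:ℝ) < q := by linarith
  have hq10pos : (0:ℝ) < q + q0 := by linarith
  have hqne : q ≠ 0 := hqpos.ne'
  have h10ne : q + q0 ≠ 0 := hq10pos.ne'
  clear_value p p0 q q0
  have hAmem : p / q ∈ Set.Icc (0:ℝ) 1 :=
    ⟨div_nonneg hp1 hqpos.le, div_le_one_of_le₀ hle hqpos.le⟩
  have hBmem : (p + p0) / (q + q0) ∈ Set.Icc (0:ℝ) 1 :=
    ⟨div_nonneg (by linarith) hq10pos.le, div_le_one_of_le₀ hle2 hq10pos.le⟩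
  have hset : fundInterval N n ε
      = Set.uIoo (p / q) ((p + p0) / (q + q0)) \ (Set.range ((↑) : ℚ → ℝ)) := by
    ext x
    simp only [fundInterval, Set.mem_setOf_eq, Set.mem_diff]
    constructor
    · rintro ⟨h1, h2, h3⟩
      have := (char N hN n ε hε x h2 h1).mp h3
      rw [← hpdef, ← hp0def, ← hqdef, ← hq0def] at this
      exact ⟨this, h2⟩
    · rintro ⟨hu, h2⟩
      have hirr : Irrational x := h2
      have hx01 : x ∈ Set.Ioo (0:ℝ) 1 := uIoo_subset_Ioo01 hAmem hBmem hu
      rw [hpdef, hp0def, hqdef, hq0def] at hu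
      exact ⟨hx01, hirr, (char N hN n ε hε x hirr hx01).mpr hu⟩
  have hvol : volume (fundInterval N n ε)
      = ENNReal.ofReal ((N:ℝ)^n / (q * (q + q0))) := by
    rw [hset, measure_diff_null ((Set.countable_range _).measure_zero _)]
    have : Set.uIoo (p / q) ((p + p0) / (q + q0))
        = Set.Ioo (min (p/q) ((p+p0)/(q+q0))) (max (p/q) ((p+p0)/(q+q0))) := rfl
    rw [this, Real.volume_Ioo, max_sub_min_eq_abs]
    congr 1
    have hD : p0 * q - p * q0 = (-(N:ℝ))^n := by
      have := det N ε n
      rw [hpdef, hp0def, hqdef, hq0def]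
      exact_mod_cast this
    have h1 : p / q - (p + p0) / (q + q0) = (p * q0 - p0 * q) / (q * (q + q0)) := by
      field_simp
      ring
    have h2 : p * q0 - p0 * q = -((-(N:ℝ))^n) := by linarith
    rw [abs_sub_comm, h1, h2, abs_div, abs_neg, abs_pow, abs_neg,
      abs_of_nonneg (by linarith : (0:ℝ) ≤ (N:ℝ)),
      abs_of_pos (by positivity : (0:ℝ) < q * (q + q0))]
  rw [hvol]
  constructor
  · apply ENNReal.ofReal_le_ofReal
    rw [div_le_div_iff₀ (by positivity) (by positivity)]
    have hNn : (0:ℝ) ≤ (N:ℝ)^n := by positivity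
    rw [pow_succ]
    nlinarith [mul_nonneg (mul_nonneg hNn hqpos.le) (sub_nonneg.mpr hkey)]
  · apply ENNReal.ofReal_le_ofReal
    rw [div_le_div_iff₀ (by positivity) (by positivity)]
    have hNn : (0:ℝ) ≤ (N:ℝ)^n := by positivity
    nlinarith [mul_nonneg (mul_nonneg hNn hqpos.le) hq0]
end

section
/- Let N ≥ 1 be an integer, let α ≥ N be an integer, and let s ∈ (1/2, 1]. If Σ_{k=α}^{∞} k^{−2s} ≤ (1+N)^{−s}, then dim_H(F_{α,N}) ≤ s. -/
open MeasureTheory Filter Set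
open scoped ENNReal
open scoped Topology NNReal

lemma TN_mem {N : ℕ} (hN : 1 ≤ N) {x : ℝ} (hx : x ∈ Set.Ioo (0:ℝ) 1) (hirr : Irrational x) :
    TN N x ∈ Set.Ioo (0:ℝ) 1 ∧ Irrational (TN N x) := by
  have hx0 : x ≠ 0 := ne_of_gt hx.1
  have hNx : Irrational ((N:ℝ)/x) := hirr.natCast_div (by omega)
  have hTN : TN N x = Int.fract ((N:ℝ)/x) := by
    rw [TN, if_neg hx0, Int.fract]
  have hirr' : Irrational (TN N x) := by
    rw [hTN]; exact hNx.sub_intCast _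
  refine ⟨⟨?_, ?_⟩, hirr'⟩
  · rw [hTN]
    rcases lt_or_eq_of_le (Int.fract_nonneg ((N:ℝ)/x)) with h | h
    · exact h
    · exfalso
      have h2 : ((N:ℝ)/x) = (⌊(N:ℝ)/x⌋ : ℝ) := by
        have := h.symm
        unfold Int.fract at this
        linarith
      exact hNx.ne_int _ h2
  · rw [hTN]; exact Int.fract_lt_one _

lemma iter_mem {N : ℕ} (hN : 1 ≤ N) {x : ℝ} (hx : x ∈ Set.Ioo (0:ℝ) 1) (hirr : Irrational x) :
    ∀ n, (TN N)^[n] x ∈ Set.Ioo (0:ℝ) 1 ∧ Irrational ((TN N)^[n] x) := by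
  intro n
  induction n with
  | zero => exact ⟨hx, hirr⟩
  | succ n ih =>
    rw [Function.iterate_succ_apply']
    exact TN_mem hN ih.1 ih.2

lemma digit_ge {N : ℕ} (hN : 1 ≤ N) {x : ℝ} (hx : x ∈ Set.Ioo (0:ℝ) 1) (hirr : Irrational x)
    (n : ℕ) : (N:ℤ) ≤ digit N n x := by
  obtain ⟨⟨h0, h1⟩, -⟩ := iter_mem hN hx hirr n
  rw [digit, Int.le_floor]
  push_cast
  rw [le_div_iff₀ h0]
  have : (1:ℝ) ≤ (N:ℝ) := by exact_mod_cast hN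
  nlinarith

lemma digit_rec {N : ℕ} (hN : 1 ≤ N) {x : ℝ} (hx : x ∈ Set.Ioo (0:ℝ) 1) (hirr : Irrational x)
    (n : ℕ) :
    (TN N)^[n] x * ((digit N n x : ℝ) + (TN N)^[n+1] x) = N := by
  obtain ⟨⟨h0, h1⟩, hi⟩ := iter_mem hN hx hirr n
  have h0' : (TN N)^[n] x ≠ 0 := ne_of_gt h0
  rw [Function.iterate_succ_apply', TN, if_neg h0', digit]
  field_simp
  ring

lemma qden_aux {N : ℕ} {ε : ℕ → ℤ} (hε : ∀ i, 1 ≤ ε i) :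
    ∀ n, 0 ≤ qden N ε n ∧ 1 ≤ qden N ε (n+1) := by
  intro n
  induction n with
  | zero => exact ⟨le_refl 0, le_refl 1⟩
  | succ n ih =>
    refine ⟨le_trans zero_le_one ih.2, ?_⟩
    show 1 ≤ ε n * qden N ε (n + 1) + (N : ℤ) * qden N ε n
    nlinarith [hε n, ih.1, ih.2, Int.ofNat_nonneg N]

lemma qden_ge_prod {N : ℕ} {ε : ℕ → ℤ} (hε : ∀ i, 1 ≤ ε i) :
    ∀ n, (∏ i ∈ Finset.range n, ε i) ≤ qden N ε (n+1) := by
  intro n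
  induction n with
  | zero => simp [qden]
  | succ n ih =>
    rw [Finset.prod_range_succ]
    show (∏ i ∈ Finset.range n, ε i) * ε n ≤ ε n * qden N ε (n + 1) + (N : ℤ) * qden N ε n
    have h1 := (qden_aux (N:=N) hε n).1
    have h2 := (qden_aux (N:=N) hε n).2
    have h3 : (0:ℤ) ≤ ∏ i ∈ Finset.range n, ε i :=
      Finset.prod_nonneg fun i _ => le_trans zero_le_one (hε i)
    nlinarith [hε n, Int.ofNat_nonneg N]

lemma qden_congr {N : ℕ} {ε ε' : ℕ → ℤ} :
    ∀ m, (∀ i, i + 2 ≤ m → ε i = ε' i) → qden N ε m = qden N ε' m := by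
  intro m
  induction m using Nat.strong_induction_on with
  | _ m ih =>
    match m with
    | 0 => intro _; rfl
    | 1 => intro _; rfl
    | (n+2) =>
      intro h
      show ε n * qden N ε (n + 1) + (N : ℤ) * qden N ε n
         = ε' n * qden N ε' (n + 1) + (N : ℤ) * qden N ε' n
      rw [h n le_rfl, ih (n+1) (by omega) (fun i hi => h i (by omega)),
        ih n (by omega) (fun i hi => h i (by omega))]

lemma pnum_congr {N : ℕ} {ε ε' : ℕ → ℤ} :
    ∀ m, (∀ i, i + 2 ≤ m → ε i = ε' i) → pnum N ε m = pnum N ε' m := by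
  intro m
  induction m using Nat.strong_induction_on with
  | _ m ih =>
    match m with
    | 0 => intro _; rfl
    | 1 => intro _; rfl
    | (n+2) =>
      intro h
      show ε n * pnum N ε (n + 1) + (N : ℤ) * pnum N ε n
         = ε' n * pnum N ε' (n + 1) + (N : ℤ) * pnum N ε' n
      rw [h n le_rfl, ih (n+1) (by omega) (fun i hi => h i (by omega)),
        ih n (by omega) (fun i hi => h i (by omega))]

lemma det_eq {N : ℕ} {ε : ℕ → ℤ} :
    ∀ n, pnum N ε (n+1) * qden N ε n - pnum N ε n * qden N ε (n+1) = -(-(N:ℤ))^n := by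
  intro n
  induction n with
  | zero => simp [pnum, qden]
  | succ n ih =>
    show (ε n * pnum N ε (n + 1) + (N : ℤ) * pnum N ε n) * qden N ε (n+1)
        - pnum N ε (n+1) * (ε n * qden N ε (n + 1) + (N : ℤ) * qden N ε n) = _
    rw [pow_succ]
    nlinarith [ih]

lemma key_identity {N : ℕ} (hN : 1 ≤ N) {x : ℝ} (hx : x ∈ Set.Ioo (0:ℝ) 1)
    (hirr : Irrational x) :
    ∀ n, x * ((qden N (fun i => digit N i x) (n+1) : ℝ)
            + (TN N)^[n] x * (qden N (fun i => digit N i x) n : ℝ))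
       = (pnum N (fun i => digit N i x) (n+1) : ℝ)
            + (TN N)^[n] x * (pnum N (fun i => digit N i x) n : ℝ) := by
  intro n
  induction n with
  | zero => simp [qden, pnum]
  | succ n ih =>
    have hrec := digit_rec hN hx hirr n
    have hQ : (qden N (fun i => digit N i x) (n+2) : ℝ)
        = (digit N n x : ℝ) * (qden N (fun i => digit N i x) (n+1) : ℝ)
          + (N:ℝ) * (qden N (fun i => digit N i x) n : ℝ) := by
      show ((qden N (fun i => digit N i x) (n+2) : ℤ) : ℝ) = _
      rw [show qden N (fun i => digit N i x) (n+2)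
          = digit N n x * qden N (fun i => digit N i x) (n + 1)
            + (N : ℤ) * qden N (fun i => digit N i x) n from rfl]
      push_cast; ring
    have hP : (pnum N (fun i => digit N i x) (n+2) : ℝ)
        = (digit N n x : ℝ) * (pnum N (fun i => digit N i x) (n+1) : ℝ)
          + (N:ℝ) * (pnum N (fun i => digit N i x) n : ℝ) := by
      rw [show pnum N (fun i => digit N i x) (n+2)
          = digit N n x * pnum N (fun i => digit N i x) (n + 1)
            + (N : ℤ) * pnum N (fun i => digit N i x) n from rfl]
      push_cast; ring
    rw [hQ, hP]
    linear_combination ((digit N n x : ℝ) + (TN N)^[n+1] x) * ih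
      + ((pnum N (fun i => digit N i x) n : ℝ)
         - x * (qden N (fun i => digit N i x) n : ℝ)) * hrec

lemma approx {N : ℕ} (hN : 1 ≤ N) {x : ℝ} (hx : x ∈ Set.Ioo (0:ℝ) 1)
    (hirr : Irrational x) (n : ℕ) :
    |x - (pnum N (fun i => digit N i x) (n+1) : ℝ) / (qden N (fun i => digit N i x) (n+1) : ℝ)|
      ≤ (N:ℝ)^n / (qden N (fun i => digit N i x) (n+1) : ℝ)^2 := by
  obtain ⟨⟨ht0, ht1⟩, -⟩ := iter_mem hN hx hirr n
  set ε : ℕ → ℤ := fun i => digit N i x with hε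
  have hd : ∀ i, 1 ≤ ε i := fun i =>
    le_trans (by exact_mod_cast hN) (digit_ge hN hx hirr i)
  set t : ℝ := (TN N)^[n] x with ht
  have hQint := (qden_aux (N:=N) hd n).2
  have hqint := (qden_aux (N:=N) hd n).1
  set Q : ℝ := (qden N ε (n+1) : ℝ) with hQ
  set q : ℝ := (qden N ε n : ℝ) with hq
  set P : ℝ := (pnum N ε (n+1) : ℝ) with hP
  set p : ℝ := (pnum N ε n : ℝ) with hp
  have hQ1 : (1:ℝ) ≤ Q := by rw [hQ]; exact_mod_cast hQint
  have hQ0 : (0:ℝ) < Q := lt_of_lt_of_le zero_lt_one hQ1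
  have hq0 : (0:ℝ) ≤ q := by rw [hq]; exact_mod_cast hqint
  have hkey : x * (Q + t * q) = P + t * p := key_identity hN hx hirr n
  have hdet : p * Q - P * q = (-1:ℝ)^n * (N:ℝ)^n := by
    have h0 := det_eq (N:=N) (ε:=ε) n
    have h2 : p * Q - P * q = ((-(pnum N ε (n+1) * qden N ε n
        - pnum N ε n * qden N ε (n+1)) : ℤ) : ℝ) := by
      rw [hp, hQ, hP, hq]; push_cast; ring
    rw [h2, h0]
    push_cast
    rw [neg_neg, neg_pow]
  have htq : (0:ℝ) ≤ t * q := mul_nonneg ht0.le hq0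
  have hden0 : (0:ℝ) < Q + t * q := by linarith
  have hNn : (0:ℝ) ≤ (N:ℝ)^n := by positivity
  have hB : (x * Q - P) * (Q + t * q) = t * ((-1:ℝ)^n * (N:ℝ)^n) := by
    linear_combination Q * hkey + t * hdet
  have hxP : x - P / Q = (x * Q - P) / Q := by field_simp
  rw [hxP, abs_div, abs_of_pos hQ0]
  have habs : |x * Q - P| = t * (N:ℝ)^n / (Q + t * q) := by
    rw [eq_div_iff hden0.ne']
    have h3 : |x * Q - P| * (Q + t * q) = |(x * Q - P) * (Q + t * q)| := by
      rw [abs_mul, abs_of_pos hden0]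
    rw [h3, hB, abs_mul, abs_mul, abs_pow, abs_neg, abs_one, one_pow, one_mul,
      abs_of_pos ht0, abs_of_nonneg hNn]
  rw [habs]
  have h1 : t * (N:ℝ)^n ≤ (N:ℝ)^n := by nlinarith
  have hstep : t * (N:ℝ)^n / (Q + t * q) ≤ (N:ℝ)^n / Q :=
    div_le_div₀ hNn h1 hQ0 (by linarith)
  calc t * (N:ℝ)^n / (Q + t * q) / Q ≤ (N:ℝ)^n / Q / Q := by
        exact div_le_div_of_nonneg_right hstep hQ0.le
    _ = (N:ℝ)^n / Q^2 := by rw [div_div, sq]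

lemma approx_fund {N : ℕ} (hN : 1 ≤ N) {n : ℕ} {ε : ℕ → ℤ} (hε : ∀ i, 1 ≤ ε i)
    {x : ℝ} (hx : x ∈ fundInterval N n ε) :
    |x - (pnum N ε (n+1) : ℝ) / (qden N ε (n+1) : ℝ)|
      ≤ (N:ℝ)^n / (qden N ε (n+1) : ℝ)^2 := by
  obtain ⟨hxI, hxirr, hdig⟩ := hx
  have hq : qden N (fun i => digit N i x) (n+1) = qden N ε (n+1) :=
    qden_congr (n+1) (fun i hi => hdig i (by omega))
  have hp : pnum N (fun i => digit N i x) (n+1) = pnum N ε (n+1) :=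
    pnum_congr (n+1) (fun i hi => hdig i (by omega))
  have := approx hN hxI hxirr n
  rwa [hq, hp] at this

lemma dist_fund {N : ℕ} (hN : 1 ≤ N) {n : ℕ} {ε : ℕ → ℤ} (hε : ∀ i, 1 ≤ ε i)
    {x y : ℝ} (hx : x ∈ fundInterval N n ε) (hy : y ∈ fundInterval N n ε) :
    dist x y ≤ 2 * (N:ℝ)^n / (qden N ε (n+1) : ℝ)^2 := by
  have h1 := approx_fund hN hε hx
  have h2 := approx_fund hN hε hy
  rw [Real.dist_eq]
  have : x - y = (x - (pnum N ε (n+1) : ℝ) / (qden N ε (n+1) : ℝ))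
      - (y - (pnum N ε (n+1) : ℝ) / (qden N ε (n+1) : ℝ)) := by ring
  rw [this]
  calc |_ - _| ≤ _ + _ := abs_sub _ _
    _ ≤ 2 * (N:ℝ)^n / (qden N ε (n+1) : ℝ)^2 := by
        rw [show (2:ℝ) * (N:ℝ)^n / (qden N ε (n+1) : ℝ)^2
          = (N:ℝ)^n / (qden N ε (n+1) : ℝ)^2 + (N:ℝ)^n / (qden N ε (n+1) : ℝ)^2 by ring]
        exact add_le_add h1 h2

lemma tsum_pi_prod {S : Type*} [Countable S] (g : S → ℝ≥0∞) :
    ∀ n : ℕ, ∑' w : Fin n → S, ∏ i, g (w i) = (∑' k, g k) ^ n := by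
  intro n
  induction n with
  | zero =>
    rw [pow_zero]
    rw [tsum_eq_single (fun i => i.elim0) (by
      intro b hb; exact absurd (funext fun i => i.elim0) (Ne.symm hb ∘ Eq.symm))]
    · simp
  | succ n ih =>
    rw [← (Fin.consEquiv (fun _ : Fin (n+1) => S)).tsum_eq, ENNReal.tsum_prod']
    simp only [Fin.consEquiv_apply]
    have : ∀ (a : S) (w : Fin n → S),
        (∏ i : Fin (n+1), g (Fin.cons (α := fun _ => S) a w i)) = g a * ∏ i : Fin n, g (w i) := by
      intro a w
      rw [Fin.prod_univ_succ]
      simp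
    calc (∑' (a : S) (w : Fin n → S), ∏ i : Fin (n+1), g (Fin.cons (α := fun _ => S) a w i))
        = ∑' (a : S) (w : Fin n → S), g a * ∏ i : Fin n, g (w i) := by
          congr 1; funext a; congr 1; funext w; exact this a w
      _ = ∑' (a : S), g a * ∑' (w : Fin n → S), ∏ i : Fin n, g (w i) := by
          congr 1; funext a; exact ENNReal.tsum_mul_left
      _ = (∑' k, g k) * (∑' k, g k) ^ n := by
          rw [ENNReal.tsum_mul_right, ih]
      _ = (∑' k, g k) ^ (n+1) := by rw [pow_succ]; ring

lemma ofReal_fin_prod {n : ℕ} (f : Fin n → ℝ) (h : ∀ i, 0 ≤ f i) :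
    ENNReal.ofReal (∏ i, f i) = ∏ i, ENNReal.ofReal (f i) := by
  induction n with
  | zero => simp
  | succ n ih =>
    rw [Fin.prod_univ_succ, Fin.prod_univ_succ, ENNReal.ofReal_mul (h 0),
      ih (fun i => f i.succ) (fun i => h i.succ)]

lemma real_bound {N : ℕ} (hN : 1 ≤ N) {s : ℝ} (hs0 : 0 < s) {n : ℕ} (ε : Fin n → ℤ)
    (hε : ∀ i, 1 ≤ ε i) {Q : ℝ} (hQ : (∏ i, ((ε i : ℤ) : ℝ)) ≤ Q) :
    (2 * (N:ℝ)^n / Q^2) ^ s ≤ 2^s * (((N:ℝ)^s)^n) * ∏ i, ((ε i : ℤ) : ℝ) ^ (-(2*s)) := by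
  have hε1 : ∀ i, (1:ℝ) ≤ ((ε i : ℤ) : ℝ) := fun i => by exact_mod_cast hε i
  have hεpos : ∀ i, (0:ℝ) < ((ε i : ℤ) : ℝ) := fun i => lt_of_lt_of_le zero_lt_one (hε1 i)
  set P : ℝ := ∏ i, ((ε i : ℤ) : ℝ) with hP
  have hPpos : 0 < P := Finset.prod_pos (fun i _ => hεpos i)
  have hQpos : 0 < Q := lt_of_lt_of_le hPpos hQ
  have hNn : (0:ℝ) ≤ 2 * (N:ℝ)^n := by positivity
  have step1 : 2 * (N:ℝ)^n / Q^2 ≤ 2 * (N:ℝ)^n / P^2 := by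
    apply div_le_div_of_nonneg_left hNn (by positivity)
    nlinarith
  have step2 := Real.rpow_le_rpow (by positivity) step1 hs0.le
  refine le_trans step2 (le_of_eq ?_)
  rw [Real.div_rpow hNn (by positivity), Real.mul_rpow (by norm_num) (by positivity)]
  have h1 : ((N:ℝ)^n)^s = ((N:ℝ)^s)^n := by
    rw [← Real.rpow_natCast (N:ℝ) n, ← Real.rpow_mul (Nat.cast_nonneg N),
      mul_comm, Real.rpow_mul (Nat.cast_nonneg N), Real.rpow_natCast]
  have h2 : (P^2)^s = ∏ i, ((ε i : ℤ) : ℝ)^(2*s) := by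
    rw [← Real.rpow_natCast P 2, ← Real.rpow_mul hPpos.le, hP,
      ← Real.finset_prod_rpow _ _ (fun i _ => (hεpos i).le)]
    norm_num
  have h3 : (∏ i, ((ε i : ℤ) : ℝ)^(-(2*s))) = ((P^2)^s)⁻¹ := by
    rw [h2, ← Finset.prod_inv_distrib]
    exact Finset.prod_congr rfl (fun i _ => Real.rpow_neg (hεpos i).le _)
  rw [h1, h3]
  ring


/-- If `s ∈ (1/2, 1]` and `∑_{k=α}^{∞} k^{-2s} ≤ (1+N)^{-s}`, then
`dim_H(F_{α,N}) ≤ s`. -/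
theorem stmt_18 (N : ℕ) (hN : 1 ≤ N) (α : ℤ) (hα : (N : ℤ) ≤ α) (s : ℝ)
    (hs : s ∈ Set.Ioc (1 / 2 : ℝ) 1)
    (h : ∑' j : ℕ, ((α : ℝ) + (j : ℝ)) ^ (-(2 * s)) ≤ (1 + (N : ℝ)) ^ (-s)) :
    dimH (Fset N (α : ℝ)) ≤ ENNReal.ofReal s := by
  obtain ⟨hs_half, hs1⟩ := hs
  have hs0 : (0:ℝ) < s := lt_trans (by norm_num) hs_half
  have hα1 : (1:ℤ) ≤ α := le_trans (by exact_mod_cast hN) hα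
  have hA0 : (0:ℝ) < (α:ℝ) := by exact_mod_cast hα1
  have hA1 : (1:ℝ) ≤ (α:ℝ) := by exact_mod_cast hα1
  have hN0 : (0:ℝ) < (N:ℝ) := by exact_mod_cast hN
  have h2s : (1:ℝ) < 2 * s := by linarith
  have hAj : ∀ x : ℝ, 0 ≤ x → (0:ℝ) < (α:ℝ) + x := fun x hx => by linarith
  -- summability of the tail series
  have hsum : Summable (fun j : ℕ => ((α:ℝ) + j) ^ (-(2*s))) := by
    rw [← summable_nat_add_iff 1]
    have hbase0 : Summable (fun j : ℕ => ((j:ℝ)) ^ (-(2*s))) :=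
      Real.summable_nat_rpow.mpr (by linarith)
    have hbase : Summable (fun j : ℕ => (((j+1:ℕ)):ℝ) ^ (-(2*s))) :=
      (summable_nat_add_iff 1).mpr hbase0
    apply Summable.of_nonneg_of_le (fun j => Real.rpow_nonneg (hAj _ (by positivity)).le _) _ hbase
    intro j
    apply Real.rpow_le_rpow_of_nonpos (by positivity) (by push_cast; linarith) (by linarith)
  -- first term bound gives 1 + N ≤ α²
  have hfirst : ((α:ℝ))^(-(2*s)) ≤ (1+(N:ℝ))^(-s) := by
    refine le_trans ?_ h
    have := Summable.le_tsum hsum 0 (fun j _ => Real.rpow_nonneg (hAj _ (by positivity)).le _)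
    simpa using this
  have hA2 : (((α:ℝ)^2)) ^ (-s) ≤ (1+(N:ℝ)) ^ (-s) := by
    have he : (((α:ℝ)^2)) ^ (-s) = ((α:ℝ)) ^ (-(2*s)) := by
      rw [← Real.rpow_natCast (α:ℝ) 2, ← Real.rpow_mul hA0.le]
      norm_num
    rw [he]; exact hfirst
  have hαsq : (1:ℝ) + (N:ℝ) ≤ (α:ℝ)^2 :=
    (Real.rpow_le_rpow_iff_of_neg (by positivity) (by positivity) (by linarith)).mp hA2
  -- reduce to vanishing Hausdorff measure
  suffices hμ : μH[s] (Fset N ((α:ℝ))) = 0 by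
    have hne : μH[(s.toNNReal : ℝ)] (Fset N ((α:ℝ))) ≠ ⊤ := by
      rw [Real.coe_toNNReal s hs0.le, hμ]
      exact ENNReal.zero_ne_top
    have hle := dimH_le_of_hausdorffMeasure_ne_top hne
    have hof : ENNReal.ofReal s = (s.toNNReal : ℝ≥0∞) := rfl
    rw [hof]
    exact hle
  -- the covering by fundamental intervals
  let S := {k : ℤ // α ≤ k}
  let ext : ∀ n : ℕ, (Fin n → S) → ℕ → ℤ := fun n w i => if h : i < n then (w ⟨i, h⟩ : ℤ) else α
  have hext1 : ∀ n (w : Fin n → S) i, 1 ≤ ext n w i := by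
    intro n w i
    simp only [ext]
    split
    · exact le_trans hα1 (w _).2
    · exact hα1
  have hQn : ∀ n (w : Fin n → S),
      (∏ i : Fin n, (((w i : ℤ)) : ℝ)) ≤ ((qden N (ext n w) (n+1) : ℤ) : ℝ) := by
    intro n w
    have hint := qden_ge_prod (N:=N) (hext1 n w) n
    have hprod : (∏ i ∈ Finset.range n, ext n w i) = ∏ i : Fin n, ((w i : ℤ)) := by
      rw [← Fin.prod_univ_eq_prod_range]
      exact Finset.prod_congr rfl (fun i _ => by simp [ext, i.isLt])
    rw [hprod] at hint
    exact_mod_cast hint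
  have hQA : ∀ n (w : Fin n → S), ((α:ℝ))^n ≤ ((qden N (ext n w) (n+1) : ℤ) : ℝ) := by
    intro n w
    refine le_trans ?_ (hQn n w)
    have : ((α:ℝ))^n = ∏ _i : Fin n, (α:ℝ) := by
      rw [Finset.prod_const, Finset.card_univ, Fintype.card_fin]
    rw [this]
    refine Finset.prod_le_prod (fun i _ => hA0.le) (fun i _ => ?_)
    exact_mod_cast (w i).2
  have hdiam : ∀ n (w : Fin n → S), EMetric.diam (fundInterval N n (ext n w))
      ≤ ENNReal.ofReal (2 * (N:ℝ)^n / ((qden N (ext n w) (n+1) : ℤ) : ℝ)^2) := by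
    intro n w
    apply EMetric.diam_le
    intro x hx y hy
    rw [edist_dist]
    exact ENNReal.ofReal_le_ofReal (dist_fund hN (hext1 n w) hx hy)
  -- uniform diameter bound
  let r : ℕ → ℝ≥0∞ := fun n => ENNReal.ofReal (2 * ((N:ℝ)/(α:ℝ)^2)^n)
  have hdiam' : ∀ n (w : Fin n → S), EMetric.diam (fundInterval N n (ext n w)) ≤ r n := by
    intro n w
    refine le_trans (hdiam n w) (ENNReal.ofReal_le_ofReal ?_)
    have hQ := hQA n w
    have hQpos : (0:ℝ) < ((qden N (ext n w) (n+1) : ℤ) : ℝ) :=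
      lt_of_lt_of_le (pow_pos hA0 n) hQ
    have e1 : 2 * ((N:ℝ)/(α:ℝ)^2)^n = 2 * (N:ℝ)^n / ((α:ℝ)^n)^2 := by
      rw [div_pow, ← pow_right_comm, mul_div_assoc]
    rw [e1]
    apply div_le_div_of_nonneg_left (by positivity) (by positivity)
    nlinarith [pow_pos hA0 n]
  have hρreal : (N:ℝ)/(α:ℝ)^2 < 1 := by
    rw [div_lt_one (by positivity)]
    linarith
  have hr0 : Tendsto r atTop (𝓝 0) := by
    have h1 : Tendsto (fun n : ℕ => 2 * ((N:ℝ)/(α:ℝ)^2)^n) atTop (𝓝 0) := by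
      have := tendsto_pow_atTop_nhds_zero_of_lt_one (by positivity : (0:ℝ) ≤ (N:ℝ)/(α:ℝ)^2) hρreal
      simpa using this.const_mul 2
    have := ENNReal.tendsto_ofReal h1
    rw [ENNReal.ofReal_zero] at this
    exact this
  have hst : ∀ n : ℕ, Fset N ((α:ℝ)) ⊆ ⋃ w : Fin n → S, fundInterval N n (ext n w) := by
    intro n x hx
    refine Set.mem_iUnion.mpr ⟨fun i => ⟨digit N (i:ℕ) x, by exact_mod_cast hx.2.2 i⟩,
      hx.1, hx.2.1, ?_⟩
    intro i hi
    simp [ext, hi]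
  have hμle := MeasureTheory.Measure.hausdorffMeasure_le_liminf_tsum s (Fset N ((α:ℝ))) r hr0
      (fun n w => fundInterval N n (ext n w))
      (Filter.Eventually.of_forall (fun n => hdiam' n)) (Filter.Eventually.of_forall hst)
  -- bound the sums
  let g : S → ℝ≥0∞ := fun k => ENNReal.ofReal (((k:ℤ):ℝ) ^ (-(2*s)))
  have hgsum : (∑' k : S, g k) ≤ ENNReal.ofReal ((1+(N:ℝ)) ^ (-s)) := by
    let e : ℕ ≃ S :=
      { toFun := fun j => ⟨α + j, le_add_of_nonneg_right (Int.ofNat_nonneg j)⟩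
        invFun := fun k => ((k : ℤ) - α).toNat
        left_inv := fun j => by simp
        right_inv := fun k => Subtype.ext (by
          show α + ((((k : ℤ) - α).toNat : ℤ)) = (k : ℤ)
          have := k.2; omega) }
    rw [← e.tsum_eq]
    have he : ∀ j : ℕ, g (e j) = ENNReal.ofReal (((α:ℝ) + j) ^ (-(2*s))) := by
      intro j
      simp only [g, e, Equiv.coe_fn_mk]
      norm_num
    rw [tsum_congr he,
      ← ENNReal.ofReal_tsum_of_nonneg (fun j => Real.rpow_nonneg (hAj _ (by positivity)).le _) hsum]
    exact ENNReal.ofReal_le_ofReal h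
  set C : ℝ≥0∞ := ENNReal.ofReal ((2:ℝ)^s) with hC
  set X : ℝ≥0∞ := ENNReal.ofReal ((N:ℝ)^s) with hX
  set Y : ℝ≥0∞ := ENNReal.ofReal ((1+(N:ℝ))^(-s)) with hY
  have hsum_n : ∀ n : ℕ, (∑' w : Fin n → S, EMetric.diam (fundInterval N n (ext n w)) ^ s)
      ≤ C * (X * Y)^n := by
    intro n
    have hterm : ∀ w : Fin n → S, EMetric.diam (fundInterval N n (ext n w)) ^ s
        ≤ C * X^n * ∏ i, g (w i) := by
      intro w
      have hQpos : (0:ℝ) < ((qden N (ext n w) (n+1) : ℤ) : ℝ) :=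
        lt_of_lt_of_le (pow_pos hA0 n) (hQA n w)
      have h1 : EMetric.diam (fundInterval N n (ext n w)) ^ s
          ≤ ENNReal.ofReal (2 * (N:ℝ)^n / ((qden N (ext n w) (n+1) : ℤ) : ℝ)^2) ^ s :=
        ENNReal.rpow_le_rpow (hdiam n w) hs0.le
      have h2 : ENNReal.ofReal (2 * (N:ℝ)^n / ((qden N (ext n w) (n+1) : ℤ) : ℝ)^2) ^ s
          = ENNReal.ofReal ((2 * (N:ℝ)^n / ((qden N (ext n w) (n+1) : ℤ) : ℝ)^2) ^ s) :=
        ENNReal.ofReal_rpow_of_nonneg (div_nonneg (by positivity) (sq_nonneg _)) hs0.le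
      have h3 := real_bound hN hs0 (fun i => ((w i : ℤ))) (fun i => le_trans hα1 (w i).2)
        (hQn n w)
      refine le_trans h1 ?_
      rw [h2]
      refine le_trans (ENNReal.ofReal_le_ofReal h3) (le_of_eq ?_)
      rw [ENNReal.ofReal_mul (by positivity), ENNReal.ofReal_mul (by positivity),
        ENNReal.ofReal_pow (by positivity),
        ofReal_fin_prod _ (fun i => Real.rpow_nonneg (le_trans zero_le_one (by exact_mod_cast le_trans hα1 (w i).2)) _)]
    calc (∑' w : Fin n → S, EMetric.diam (fundInterval N n (ext n w)) ^ s)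
        ≤ ∑' w : Fin n → S, C * X^n * ∏ i, g (w i) := ENNReal.tsum_le_tsum hterm
      _ = C * X^n * ∑' w : Fin n → S, ∏ i, g (w i) := ENNReal.tsum_mul_left
      _ = C * X^n * (∑' k : S, g k)^n := by rw [tsum_pi_prod]
      _ ≤ C * X^n * Y^n := by
          exact mul_le_mul_right (pow_le_pow_left' hgsum n) _
      _ = C * (X * Y)^n := by rw [mul_pow, mul_assoc]
  have hρ1 : X * Y < 1 := by
    rw [hX, hY, ← ENNReal.ofReal_mul (by positivity)]
    apply ENNReal.ofReal_lt_one.mpr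
    have he : (N:ℝ)^s * (1+(N:ℝ))^(-s) = ((N:ℝ)/(1+(N:ℝ)))^s := by
      rw [Real.div_rpow (by positivity) (by positivity), Real.rpow_neg (by positivity),
        div_eq_mul_inv]
    rw [he]
    exact Real.rpow_lt_one (by positivity) (by rw [div_lt_one (by positivity)]; linarith) hs0
  have htend : Tendsto (fun n : ℕ => C * (X * Y)^n) atTop (𝓝 0) := by
    have h1 := ENNReal.tendsto_pow_atTop_nhds_zero_of_lt_one hρ1
    have hCne : C ≠ ⊤ := by rw [hC]; exact ENNReal.ofReal_ne_top
    have h2 := ENNReal.Tendsto.const_mul h1 (Or.inr hCne)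
    simpa using h2
  have hfin : μH[s] (Fset N ((α:ℝ))) ≤ 0 := by
    refine le_trans hμle ?_
    refine le_trans (Filter.liminf_le_liminf (Filter.Eventually.of_forall hsum_n)) ?_
    rw [htend.liminf_eq]
  exact le_antisymm hfin zero_le
end
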